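/- Let D be a category, Γ: D → D a functor with a natural transformation γ: Γ → Id inducing bijections Hom(ΓE, ΓF) ≅ Hom(ΓE, F), and suppose Γ has a right adjoint Λ. Let λ: Id → Λ be the composite of the unit Id → ΛΓ with Λγ. Then: (a) Λγ: ΛΓ → Λ is an isomorphism; (b) Γλ: Γ → ΓΛ is an isomorphism; (c) the maps λ(Λ) and Λ(λ) from Λ to ΛΛ agree and are isomorphisms. -/

import Mathlib

/-!
STATEMENT 13: Let `D` be a category, `Γ : D → D` a functor with a natural transformation
`γ : Γ → Id` inducing bijections `Hom(ΓE, ΓF) ≅ Hom(ΓE, F)`, and suppose `Γ` has a right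
adjoint `Λ`.  Let `λ : Id → Λ` be the composite of the unit `Id → ΛΓ` with `Λγ`.  Then:
(a) `Λγ : ΛΓ → Λ` is an isomorphism; (b) `Γλ : Γ → ΓΛ` is an isomorphism; (c) the maps
`λ(Λ)` and `Λ(λ)` from `Λ` to `ΛΛ` agree and are isomorphisms.

(Here `λ` is written out componentwise: `λ_E = unit_E ≫ Λ(γ_E)`.)
-/

universe u v

open CategoryTheory

section Aux

variable {D : Type u} [Category.{v} D] (Γ Λ : D ⥤ D) (adj : Γ ⊣ Λ) (γ : Γ ⟶ 𝟭 D)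
  (h : ∀ E F : D, Function.Bijective (fun f : Γ.obj E ⟶ Γ.obj F => f ≫ γ.app F))

include h

/-- `γ_{ΓF} = Γγ_F`. -/
lemma aux_gamma_gamma (F : D) : γ.app (Γ.obj F) = Γ.map (γ.app F) := by
  apply (h (Γ.obj F) F).1
  have := γ.naturality (γ.app F)
  simp only [Functor.id_map, Functor.id_obj] at this
  simp only []
  exact this.symm

/-- `ε_E ≫ λ_E = γ_{ΛE}`. -/
lemma aux_eps_lambda (E : D) :
    adj.counit.app E ≫ adj.unit.app E ≫ Λ.map (γ.app E) = γ.app (Λ.obj E) := by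
  have h1 := adj.unit.naturality (adj.counit.app E)
  simp only [Functor.id_map, Functor.comp_map, Functor.id_obj, Functor.comp_obj] at h1
  -- h1 : adj.counit.app E ≫ adj.unit.app E = adj.unit.app (Γ.obj (Λ.obj E)) ≫ Λ.map (Γ.map (adj.counit.app E))
  have h2 := γ.naturality (adj.counit.app E)
  simp only [Functor.id_map, Functor.id_obj, Functor.comp_obj] at h2
  -- h2 : Γ.map (adj.counit.app E) ≫ γ.app E = γ.app (Γ.obj (Λ.obj E)) ≫ adj.counit.app E
  have h3 := adj.unit.naturality (γ.app (Λ.obj E))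
  simp only [Functor.id_map, Functor.comp_map, Functor.id_obj, Functor.comp_obj] at h3
  calc adj.counit.app E ≫ adj.unit.app E ≫ Λ.map (γ.app E)
      = (adj.counit.app E ≫ adj.unit.app E) ≫ Λ.map (γ.app E) := by rw [Category.assoc]
    _ = adj.unit.app (Γ.obj (Λ.obj E)) ≫ Λ.map (Γ.map (adj.counit.app E)) ≫ Λ.map (γ.app E) := by
        rw [h1, Category.assoc]
    _ = adj.unit.app (Γ.obj (Λ.obj E)) ≫ Λ.map (Γ.map (adj.counit.app E) ≫ γ.app E) := by
        rw [Λ.map_comp]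
    _ = adj.unit.app (Γ.obj (Λ.obj E)) ≫ Λ.map (γ.app (Γ.obj (Λ.obj E)) ≫ adj.counit.app E) := by
        rw [h2]
    _ = adj.unit.app (Γ.obj (Λ.obj E)) ≫ Λ.map (Γ.map (γ.app (Λ.obj E)) ≫ adj.counit.app E) := by
        rw [aux_gamma_gamma Γ γ h]
    _ = adj.unit.app (Γ.obj (Λ.obj E)) ≫ Λ.map (Γ.map (γ.app (Λ.obj E))) ≫
          Λ.map (adj.counit.app E) := by rw [Λ.map_comp]
    _ = (γ.app (Λ.obj E) ≫ adj.unit.app (Λ.obj E)) ≫ Λ.map (adj.counit.app E) := by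
        rw [← Category.assoc, ← h3, Category.assoc]
    _ = γ.app (Λ.obj E) ≫ adj.unit.app (Λ.obj E) ≫ Λ.map (adj.counit.app E) := by
        rw [Category.assoc]
    _ = γ.app (Λ.obj E) := by rw [adj.right_triangle_components]; simp

end Aux

theorem statement13 {D : Type u} [Category.{v} D] (Γ Λ : D ⥤ D) (adj : Γ ⊣ Λ)
    (γ : Γ ⟶ 𝟭 D)
    (h : ∀ E F : D, Function.Bijective (fun f : Γ.obj E ⟶ Γ.obj F => f ≫ γ.app F)) :
    (∀ E : D, IsIso (Λ.map (γ.app E))) ∧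
    (∀ E : D, IsIso (Γ.map (adj.unit.app E ≫ Λ.map (γ.app E)))) ∧
    (∀ F : D,
      adj.unit.app (Λ.obj F) ≫ Λ.map (γ.app (Λ.obj F)) =
        Λ.map (adj.unit.app F ≫ Λ.map (γ.app F)) ∧
      IsIso (adj.unit.app (Λ.obj F) ≫ Λ.map (γ.app (Λ.obj F)))) := by
  -- choose `u_E : ΓΛE ⟶ ΓE` with `u_E ≫ γ_E = ε_E`
  choose u hu using fun E => (h (Λ.obj E) E).2 (adj.counit.app E)
  simp only at hu
  -- (a)
  have ha : ∀ E : D, IsIso (Λ.map (γ.app E)) := by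
    intro E
    refine ⟨adj.unit.app (Λ.obj E) ≫ Λ.map (u E), ?_, ?_⟩
    · -- Λγ_E ≫ η_{ΛE} ≫ Λ u_E = 𝟙
      have hnat := adj.unit.naturality (Λ.map (γ.app E))
      simp only [Functor.id_map, Functor.comp_map, Functor.id_obj, Functor.comp_obj] at hnat
      have key : Γ.map (Λ.map (γ.app E)) ≫ u E = adj.counit.app (Γ.obj E) := by
        apply (h (Λ.obj (Γ.obj E)) E).1
        simp only [Category.assoc, hu]
        have := adj.counit.naturality (γ.app E)
        simp only [Functor.id_map, Functor.comp_map, Functor.id_obj, Functor.comp_obj] at this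
        exact this
      calc Λ.map (γ.app E) ≫ adj.unit.app (Λ.obj E) ≫ Λ.map (u E)
          = (Λ.map (γ.app E) ≫ adj.unit.app (Λ.obj E)) ≫ Λ.map (u E) := by
            rw [Category.assoc]
        _ = adj.unit.app (Λ.obj (Γ.obj E)) ≫ Λ.map (Γ.map (Λ.map (γ.app E))) ≫
              Λ.map (u E) := by rw [hnat, Category.assoc]
        _ = adj.unit.app (Λ.obj (Γ.obj E)) ≫ Λ.map (Γ.map (Λ.map (γ.app E)) ≫ u E) := by
            rw [Λ.map_comp]
        _ = adj.unit.app (Λ.obj (Γ.obj E)) ≫ Λ.map (adj.counit.app (Γ.obj E)) := by rw [key]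
        _ = 𝟙 _ := adj.right_triangle_components (Γ.obj E)
    · -- η_{ΛE} ≫ Λ u_E ≫ Λγ_E = 𝟙
      calc (adj.unit.app (Λ.obj E) ≫ Λ.map (u E)) ≫ Λ.map (γ.app E)
          = adj.unit.app (Λ.obj E) ≫ Λ.map (u E ≫ γ.app E) := by
            rw [Category.assoc, Λ.map_comp]
        _ = adj.unit.app (Λ.obj E) ≫ Λ.map (adj.counit.app E) := by rw [hu]
        _ = 𝟙 _ := adj.right_triangle_components E
  refine ⟨ha, ?_, ?_⟩
  · -- (b)
    intro E
    refine ⟨u E, ?_, ?_⟩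
    · -- Γλ_E ≫ u_E = 𝟙
      apply (h E E).1
      simp only [Category.assoc, hu]
      -- goal : Γ.map (λ_E) ≫ ε_E = γ_E  (up to `𝟙 ≫ γ_E` on the right)
      have := adj.counit.naturality (γ.app E)
      simp only [Functor.id_map, Functor.comp_map, Functor.id_obj, Functor.comp_obj] at this
      calc Γ.map (adj.unit.app E ≫ Λ.map (γ.app E)) ≫ adj.counit.app E
          = Γ.map (adj.unit.app E) ≫ Γ.map (Λ.map (γ.app E)) ≫ adj.counit.app E := by
            rw [Γ.map_comp, Category.assoc]
        _ = Γ.map (adj.unit.app E) ≫ adj.counit.app (Γ.obj E) ≫ γ.app E := by rw [this]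
        _ = (Γ.map (adj.unit.app E) ≫ adj.counit.app (Γ.obj E)) ≫ γ.app E := by
            rw [Category.assoc]
        _ = 𝟙 _ ≫ γ.app E := by
            rw [show Γ.map (adj.unit.app E) ≫ adj.counit.app (Γ.obj E) = 𝟙 (Γ.obj E) from
              adj.left_triangle_components E]
    · -- u_E ≫ Γλ_E = 𝟙
      apply (h (Λ.obj E) (Λ.obj E)).1
      simp only [Category.assoc]
      have hg := γ.naturality (adj.unit.app E ≫ Λ.map (γ.app E))
      simp only [Functor.id_map, Functor.id_obj, Functor.comp_obj] at hg
      calc u E ≫ Γ.map (adj.unit.app E ≫ Λ.map (γ.app E)) ≫ γ.app (Λ.obj E)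
          = u E ≫ γ.app E ≫ adj.unit.app E ≫ Λ.map (γ.app E) := by rw [hg]
        _ = (u E ≫ γ.app E) ≫ adj.unit.app E ≫ Λ.map (γ.app E) := by rw [Category.assoc]
        _ = adj.counit.app E ≫ adj.unit.app E ≫ Λ.map (γ.app E) := by rw [hu]
        _ = γ.app (Λ.obj E) := aux_eps_lambda Γ Λ adj γ h E
        _ = 𝟙 _ ≫ γ.app (Λ.obj E) := by rw [Category.id_comp]
  · -- (c)
    intro F
    have heq : adj.unit.app (Λ.obj F) ≫ Λ.map (γ.app (Λ.obj F)) =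
        Λ.map (adj.unit.app F ≫ Λ.map (γ.app F)) := by
      have := aux_eps_lambda Γ Λ adj γ h F
      calc adj.unit.app (Λ.obj F) ≫ Λ.map (γ.app (Λ.obj F))
          = adj.unit.app (Λ.obj F) ≫
              Λ.map (adj.counit.app F ≫ adj.unit.app F ≫ Λ.map (γ.app F)) := by rw [this]
        _ = adj.unit.app (Λ.obj F) ≫ Λ.map (adj.counit.app F) ≫
              Λ.map (adj.unit.app F ≫ Λ.map (γ.app F)) := by rw [Λ.map_comp]
        _ = (adj.unit.app (Λ.obj F) ≫ Λ.map (adj.counit.app F)) ≫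
              Λ.map (adj.unit.app F ≫ Λ.map (γ.app F)) := by rw [Category.assoc]
        _ = Λ.map (adj.unit.app F ≫ Λ.map (γ.app F)) := by
            rw [adj.right_triangle_components]; simp
    refine ⟨heq, ?_⟩
    have hiso : IsIso (Λ.map (γ.app (Λ.obj F))) := ha (Λ.obj F)
    refine ⟨inv (Λ.map (γ.app (Λ.obj F))) ≫ Λ.map (adj.counit.app F), ?_, ?_⟩
    · calc (adj.unit.app (Λ.obj F) ≫ Λ.map (γ.app (Λ.obj F))) ≫
            inv (Λ.map (γ.app (Λ.obj F))) ≫ Λ.map (adj.counit.app F)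
          = adj.unit.app (Λ.obj F) ≫ (Λ.map (γ.app (Λ.obj F)) ≫
              inv (Λ.map (γ.app (Λ.obj F)))) ≫ Λ.map (adj.counit.app F) := by
            simp only [Category.assoc]
        _ = adj.unit.app (Λ.obj F) ≫ Λ.map (adj.counit.app F) := by
            rw [IsIso.hom_inv_id, Category.id_comp]
        _ = 𝟙 _ := adj.right_triangle_components F
    · have key : Λ.map (adj.counit.app F) ≫
          (adj.unit.app (Λ.obj F) ≫ Λ.map (γ.app (Λ.obj F))) = Λ.map (γ.app (Λ.obj F)) := by
        rw [heq, ← Λ.map_comp, aux_eps_lambda Γ Λ adj γ h F]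
      calc (inv (Λ.map (γ.app (Λ.obj F))) ≫ Λ.map (adj.counit.app F)) ≫
            (adj.unit.app (Λ.obj F) ≫ Λ.map (γ.app (Λ.obj F)))
          = inv (Λ.map (γ.app (Λ.obj F))) ≫ Λ.map (adj.counit.app F) ≫
              (adj.unit.app (Λ.obj F) ≫ Λ.map (γ.app (Λ.obj F))) := by
            simp only [Category.assoc]
        _ = inv (Λ.map (γ.app (Λ.obj F))) ≫ Λ.map (γ.app (Λ.obj F)) := by rw [key]
        _ = 𝟙 _ := IsIso.inv_hom_id _
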